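/- Let (Ω, 𝓕, μ) be a probability space and L : Ω → ℝ a nonnegative measurable function with ∫ L dμ = 1 and L·log L ∈ L¹(μ) (with the convention 0·log 0 = 0). For n ∈ ℕ with ∫ min(L,n) dμ > 0 set Lₙ = min(L,n) / ∫ min(L,n) dμ. Then ∫ min(L,n) dμ → 1 and Lₙ·log Lₙ converges to L·log L in L¹(μ) as n → ∞. -/

import Mathlib

open MeasureTheory Filter Topology

lemma aux_bound_12 (t c S : ℝ) (ht0 : 0 ≤ t) (htS : t ≤ S) (hc : 1/2 ≤ c) (hc1 : c ≤ 1) :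
    |t / c * Real.log (t / c)| ≤ 1 + 2 * Real.log 2 * S + 2 * |S * Real.log S| := by
  have hS0 : 0 ≤ S := le_trans ht0 htS
  have hc0 : 0 < c := lt_of_lt_of_le (by norm_num) hc
  set s := t / c with hs
  have hs0 : 0 ≤ s := div_nonneg ht0 hc0.le
  have hs2S : s ≤ 2 * S := by
    rw [hs, div_le_iff₀ hc0]
    nlinarith
  have hRHS0 : 0 ≤ 2 * Real.log 2 * S + 2 * |S * Real.log S| := by
    have : 0 ≤ Real.log 2 := Real.log_nonneg (by norm_num)
    positivity
  rcases eq_or_lt_of_le hs0 with h0 | hspos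
  · rw [← h0]
    simp
    linarith [abs_mul S (Real.log S)]
  rcases le_or_gt s 1 with h1 | h1
  · have := Real.abs_log_mul_self_lt s hspos h1
    rw [abs_mul] at this ⊢
    rw [mul_comm] at this
    linarith
  · -- s > 1
    have hlogs : 0 < Real.log s := Real.log_pos h1
    have hS1 : 1 < 2 * S := lt_of_lt_of_le h1 hs2S
    have hSpos : 0 < S := by linarith
    have hlog_le : Real.log s ≤ Real.log (2 * S) := Real.log_le_log hspos hs2S
    have h2S : Real.log (2 * S) = Real.log 2 + Real.log S := Real.log_mul (by norm_num) hSpos.ne'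
    have hlog2S : 0 < Real.log (2 * S) := Real.log_pos hS1
    have hb : s * Real.log s ≤ 2 * S * Real.log (2 * S) := by
      have h1' : s * Real.log s ≤ s * Real.log (2 * S) :=
        mul_le_mul_of_nonneg_left hlog_le hs0
      have h2' : s * Real.log (2 * S) ≤ 2 * S * Real.log (2 * S) :=
        mul_le_mul_of_nonneg_right hs2S hlog2S.le
      linarith
    have habs : |s * Real.log s| = s * Real.log s :=
      abs_of_nonneg (mul_nonneg hs0 hlogs.le)
    have hSlog : S * Real.log S ≤ |S * Real.log S| := le_abs_self _
    rw [habs]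
    rw [h2S] at hb
    nlinarith

theorem stmt_12 {Ω : Type*} [MeasurableSpace Ω] (μ : Measure Ω) [IsProbabilityMeasure μ]
    (L : Ω → ℝ) (hLm : Measurable L) (hL0 : 0 ≤ L) (hL1 : ∫ x, L x ∂μ = 1)
    (hLlogL : Integrable (fun x => L x * Real.log (L x)) μ) :
    Tendsto (fun n : ℕ => ∫ x, min (L x) (n : ℝ) ∂μ) atTop (nhds 1) ∧
      Tendsto (fun n : ℕ => ∫ x,
          |min (L x) (n : ℝ) / (∫ y, min (L y) (n : ℝ) ∂μ) *
              Real.log (min (L x) (n : ℝ) / (∫ y, min (L y) (n : ℝ) ∂μ)) -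
            L x * Real.log (L x)| ∂μ)
        atTop (nhds 0) := by
  have hLint : Integrable L μ := by
    by_contra h
    rw [integral_undef h] at hL1
    norm_num at hL1
  set c : ℕ → ℝ := fun n => ∫ y, min (L y) (n : ℝ) ∂μ with hcdef
  have hmin0 : ∀ (n : ℕ) (x : Ω), 0 ≤ min (L x) (n : ℝ) := fun n x =>
    le_min (hL0 x) (Nat.cast_nonneg n)
  have hmeas_min : ∀ n : ℕ, Measurable (fun x => min (L x) (n : ℝ)) := fun n =>
    hLm.min measurable_const
  have hnormle : ∀ (n : ℕ) (x : Ω), ‖min (L x) (n : ℝ)‖ ≤ L x := by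
    intro n x
    rw [Real.norm_eq_abs, abs_of_nonneg (hmin0 n x)]
    exact min_le_left _ _
  have hint_min : ∀ n : ℕ, Integrable (fun x => min (L x) (n : ℝ)) μ := fun n =>
    hLint.mono' (hmeas_min n).aestronglyMeasurable (Eventually.of_forall (hnormle n))
  have hptmin : ∀ x : Ω, ∀ᶠ n : ℕ in atTop, min (L x) (n : ℝ) = L x := by
    intro x
    filter_upwards [eventually_ge_atTop ⌈L x⌉₊] with n hn
    exact min_eq_left (le_trans (Nat.le_ceil _) (by exact_mod_cast hn))
  have hc1 : Tendsto c atTop (𝓝 1) := by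
    rw [← hL1]
    apply tendsto_integral_of_dominated_convergence L
      (fun n => (hmeas_min n).aestronglyMeasurable) hLint
      (fun n => Eventually.of_forall (hnormle n))
    filter_upwards with x
    exact Tendsto.congr' (Eventually.mono (hptmin x) fun n hn => hn.symm) tendsto_const_nhds
  refine ⟨hc1, ?_⟩
  have hcle1 : ∀ n : ℕ, c n ≤ 1 := by
    intro n
    rw [← hL1]
    exact integral_mono (hint_min n) hLint fun x => min_le_left _ _
  have hchalf : ∀ᶠ n : ℕ in atTop, 1 / 2 ≤ c n :=
    hc1.eventually (eventually_ge_nhds (by norm_num))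
  set f : Ω → ℝ := fun x => L x * Real.log (L x) with hfdef
  set F : ℕ → Ω → ℝ := fun n x =>
    min (L x) (n : ℝ) / c n * Real.log (min (L x) (n : ℝ) / c n) with hFdef
  -- dominating function
  set G : Ω → ℝ := fun x => 1 + 2 * Real.log 2 * L x + 3 * |L x * Real.log (L x)| with hGdef
  have hGint : Integrable G μ := by
    apply Integrable.add
    · exact (integrable_const 1).add (hLint.const_mul _)
    · exact (hLlogL.abs.const_mul 3)
  have key : Tendsto (fun n : ℕ => ∫ x, |F n x - f x| ∂μ) atTop (𝓝 (∫ _ : Ω, (0:ℝ) ∂μ)) := by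
    apply tendsto_integral_filter_of_dominated_convergence G
    · filter_upwards with n
      exact ((((hmeas_min n).div_const _).mul
        (Real.measurable_log.comp ((hmeas_min n).div_const _))).sub
        (hLm.mul (Real.measurable_log.comp hLm))).abs.aestronglyMeasurable
    · filter_upwards [hchalf] with n hn
      filter_upwards with x
      have hb := aux_bound_12 (min (L x) (n : ℝ)) (c n) (L x) (hmin0 n x)
        (min_le_left _ _) hn (hcle1 n)
      have habs : L x * |Real.log (L x)| = |L x * Real.log (L x)| := by
        rw [abs_mul, abs_of_nonneg (hL0 x)]
      rw [Real.norm_eq_abs, abs_abs]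
      calc |F n x - f x| ≤ |F n x| + |f x| := abs_sub _ _
        _ ≤ (1 + 2 * Real.log 2 * L x + 2 * |L x * Real.log (L x)|) + |f x| := by
            exact add_le_add hb le_rfl
        _ ≤ G x := by simp [hGdef, hfdef]; linarith
    · exact hGint
    · filter_upwards with x
      have hF : Tendsto (fun n => F n x) atTop (𝓝 (f x)) := by
        rcases eq_or_lt_of_le (hL0 x) with h0 | hpos
        · have : ∀ n : ℕ, F n x = 0 := by
            intro n
            simp [hFdef, ← h0, min_eq_left (Nat.cast_nonneg (α := ℝ) n)]
          rw [show f x = 0 by simp [hfdef, ← h0]]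
          simpa [this] using tendsto_const_nhds (α := ℝ) (f := atTop (α := ℕ))
        · have hdiv : Tendsto (fun n : ℕ => L x / c n) atTop (𝓝 (L x)) := by
            have := Tendsto.div (tendsto_const_nhds (x := L x)) hc1 one_ne_zero
            simpa [Pi.div_def] using this
          have hlim : Tendsto (fun n : ℕ => L x / c n * Real.log (L x / c n)) atTop
              (𝓝 (f x)) := hdiv.mul (hdiv.log hpos.ne')
          apply Tendsto.congr' _ hlim
          filter_upwards [hptmin x] with n hn
          simp [hFdef, hn]
      have := (hF.sub (tendsto_const_nhds (x := f x))).abs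
      simpa using this
  simpa using key
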